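/- arXiv:1404.6168 — 2 statements merged into one kernel-verified Lean document; each statement's English description precedes it below -/
import Mathlib

section
/- Let E be a semilattice with zero and let (e_j)_{j∈J} be a nonempty finite family in E×. Then the element ⋁_{j∈J} e_j ∈ ℤ[E×] is the smallest idempotent of ℤ[E×] dominating all the e_j; precisely: (⋁_{j∈J} e_j)² = ⋁_{j∈J} e_j; e_j · (⋁_{j∈J} e_j) = e_j for every j ∈ J; and for every idempotent x ∈ ℤ[E×] with e_j · x = e_j for all j ∈ J one has (⋁_{j∈J} e_j) · x = ⋁_{j∈J} e_j. -/
set_option linter.unusedSectionVars false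

/-- A *semilattice with zero*: a commutative idempotent semigroup with an
absorbing element `0`. -/
class SemilatticeWithZero (E : Type) extends CommSemigroup E, Zero E where
  mul_idem : ∀ e : E, e * e = e
  zero_mul : ∀ e : E, 0 * e = 0

namespace IndRes

variable {E : Type} [SemilatticeWithZero E]

/-- `single e c`, viewed in the semigroup algebra `ℤ[E]`. -/
noncomputable def sgl (e : E) (c : ℤ) : MonoidAlgebra ℤ E := MonoidAlgebra.ofCoeff (Finsupp.single e c)

/-- Truncation map deleting the coefficient at `0`. -/
noncomputable def T (x : MonoidAlgebra ℤ E) : MonoidAlgebra ℤ E := x - sgl 0 (x.coeff 0)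

lemma sgl_apply_self (e : E) (c : ℤ) : (sgl e c).coeff e = c := Finsupp.single_eq_same

lemma sgl_apply_ne (e d : E) (c : ℤ) (h : e ≠ d) : (sgl e c).coeff d = 0 := Finsupp.single_eq_of_ne (Ne.symm h)

lemma sgl_add (e : E) (c d : ℤ) : sgl e (c + d) = sgl e c + sgl e d := congrArg MonoidAlgebra.ofCoeff (Finsupp.single_add e c d)

lemma sgl_sub (e : E) (c d : ℤ) : sgl e (c - d) = sgl e c - sgl e d := congrArg MonoidAlgebra.ofCoeff (Finsupp.single_sub e c d)

lemma T_apply_zero (x : MonoidAlgebra ℤ E) : (T x).coeff 0 = 0 := by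
  show ((x - sgl 0 (x.coeff 0) : MonoidAlgebra ℤ E)).coeff 0 = 0
  rw [MonoidAlgebra.coeff_sub, Finsupp.sub_apply, sgl_apply_self, sub_self]

/-- `ℤ[E^×]`, realized as the additive subgroup of the semigroup algebra
`ℤ[E]` consisting of the elements whose coefficient at `0` vanishes; it is the free
`ℤ`-module with basis `E^× = E \ {0}`. -/
noncomputable def ZS (E : Type) [SemilatticeWithZero E] : AddSubgroup (MonoidAlgebra ℤ E) where
  carrier := {x | x.coeff 0 = 0}
  zero_mem' := rfl
  add_mem' := by
    intro a b ha hb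
    simp only [Set.mem_setOf_eq] at *
    rw [MonoidAlgebra.coeff_add, Finsupp.add_apply, ha, hb, add_zero]
  neg_mem' := by
    intro a ha
    simp only [Set.mem_setOf_eq] at *
    rw [MonoidAlgebra.coeff_neg, Finsupp.neg_apply, ha, neg_zero]

/-- The integral semigroup ring `ℤ[E^×]`. -/
abbrev ZE (E : Type) [SemilatticeWithZero E] : Type := ↥(ZS E)

lemma mem_ZS {x : MonoidAlgebra ℤ E} : x ∈ ZS E ↔ x.coeff 0 = 0 := Iff.rfl

lemma T_eq_self {x : MonoidAlgebra ℤ E} (h : x.coeff 0 = 0) : T x = x := by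
  simp [T, h, sgl]

lemma T_add (a b : MonoidAlgebra ℤ E) : T (a + b) = T a + T b := by
  unfold T
  rw [show ((a + b).coeff 0) = a.coeff 0 + b.coeff 0 from Finsupp.add_apply a.coeff b.coeff 0, sgl_add]
  abel

lemma T_sub_sgl (x : MonoidAlgebra ℤ E) (m : ℤ) : T (x - sgl 0 m) = T x := by
  unfold T
  have h : ((x - sgl 0 m : MonoidAlgebra ℤ E)).coeff 0 = x.coeff 0 - m := by
    rw [MonoidAlgebra.coeff_sub, Finsupp.sub_apply, sgl_apply_self]
  rw [h, sgl_sub]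
  abel

lemma single_zero_mul (c : ℤ) (b : MonoidAlgebra ℤ E) :
    (sgl 0 c) * b = sgl 0 (((sgl 0 c * b : MonoidAlgebra ℤ E)).coeff 0) := by
  classical
  ext d
  by_cases hd : d = 0
  · subst hd; rw [sgl_apply_self]
  · rw [sgl_apply_ne 0 d _ (Ne.symm hd)]
    by_contra h
    have hmem : d ∈ ((sgl (0:E) c) * b).coeff.support := Finsupp.mem_support_iff.mpr h
    have h2 := MonoidAlgebra.support_coeff_mul_subset (sgl (0:E) c) b hmem
    rw [Finset.mem_mul] at h2
    obtain ⟨a, ha, b', _, hab⟩ := h2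
    have ha' : a = 0 := by
      have := Finsupp.support_single_subset (ha : a ∈ (Finsupp.single (0:E) c).support)
      simpa using this
    exact hd (by rw [← hab, ha', SemilatticeWithZero.zero_mul])

lemma T_mul_left (a b : MonoidAlgebra ℤ E) : T (T a * b) = T (a * b) := by
  have h1 : T a * b = a * b - (sgl 0 (a.coeff 0)) * b := by rw [T, sub_mul]
  rw [h1, single_zero_mul, T_sub_sgl]

lemma T_mul_right (a b : MonoidAlgebra ℤ E) : T (a * T b) = T (a * b) := by
  rw [mul_comm a (T b), T_mul_left, mul_comm]

noncomputable instance : Mul (ZE E) :=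
  ⟨fun x y => ⟨T (x.1 * y.1), T_apply_zero _⟩⟩

lemma ZE.val_mul (x y : ZE E) : (x * y).1 = T (x.1 * y.1) := rfl

noncomputable instance : NonUnitalCommRing (ZE E) :=
  { (inferInstance : AddCommGroup (ZE E)) with
    mul := (· * ·)
    left_distrib := by
      intro x y z
      apply Subtype.ext
      show T (x.1 * (y.1 + z.1)) = T (x.1 * y.1) + T (x.1 * z.1)
      rw [mul_add, T_add]
    right_distrib := by
      intro x y z
      apply Subtype.ext
      show T ((x.1 + y.1) * z.1) = T (x.1 * z.1) + T (y.1 * z.1)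
      rw [add_mul, T_add]
    zero_mul := by
      intro x
      apply Subtype.ext
      show T ((0 : MonoidAlgebra ℤ E) * x.1) = 0
      rw [zero_mul]
      simp [T, sgl]
    mul_zero := by
      intro x
      apply Subtype.ext
      show T (x.1 * (0 : MonoidAlgebra ℤ E)) = 0
      rw [mul_zero]
      simp [T, sgl]
    mul_assoc := by
      intro x y z
      apply Subtype.ext
      show T (T (x.1 * y.1) * z.1) = T (x.1 * T (y.1 * z.1))
      rw [T_mul_left, T_mul_right, mul_assoc]
    mul_comm := by
      intro x y
      apply Subtype.ext
      show T (x.1 * y.1) = T (y.1 * x.1)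
      rw [mul_comm] }

/-- The canonical image of `e ∈ E` in `ℤ[E^×]`: the basis element `e` if `e ≠ 0`,
and `0` if `e = 0`. -/
noncomputable def elt (e : E) : ZE E := ⟨T (sgl e 1), T_apply_zero _⟩

/-- Product of a (nonempty) finite family in a commutative non-unital ring, computed inside
the unitization.  For a nonempty index set this is the iterated product. -/
noncomputable def nprod {ι A : Type} [NonUnitalCommRing A] (s : Finset ι) (f : ι → A) : A :=
  (∏ j ∈ s, (Unitization.inr (f j) : Unitization ℤ A)).snd

/-- The join `⋁_{j ∈ J} x_j = ∑_{∅ ≠ J' ⊆ J} (-1)^{|J'|+1} ∏_{j ∈ J'} x_j`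
of a finite family of idempotents of a commutative non-unital ring. -/
noncomputable def rjoin {ι A : Type} [NonUnitalCommRing A] (s : Finset ι) (f : ι → A) : A :=
  ∑ t ∈ s.powerset.filter (fun t => t.Nonempty), ((-1 : ℤ) ^ (t.card + 1)) • nprod t f

/-- The join `⋁_{j ∈ J} e_j ∈ ℤ[E^×]` of a finite family of elements of `E`:
`∑_{∅ ≠ J' ⊆ J} (-1)^{|J'|+1} ∏_{j ∈ J'} e_j`, where a product whose value in `E`
is `0` contributes `0`. -/
noncomputable def join {ι : Type} (s : Finset ι) (e : ι → E) : ZE E :=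
  rjoin s (fun j => elt (e j))

/-- Iterated product of a nonempty list in a semigroup with zero (the value on the
empty list is the junk value `0`). -/
def listProd : List E → E
  | [] => 0
  | [a] => a
  | a :: b :: l => a * listProd (b :: l)

/-- The product `∏_{j ∈ s} f j ∈ E` of a (nonempty) finite family. -/
noncomputable def eprod {ι : Type} (s : Finset ι) (f : ι → E) : E :=
  listProd (s.toList.map f)

/-- The support `E(x)` of `x ∈ ℤ[E^×]`: the finite set of elements of `E^×` appearing
with a nonzero coefficient in the reduced form of `x`. -/
noncomputable def supp (x : ZE E) : Finset E := x.1.coeff.support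

section Action

variable {Γ : Type} [Group Γ] [MulAction Γ E]

/-- The induced action of `g ∈ Γ` on `ℤ[E^×]`: the `ℤ`-linear map sending a basis
element `e ∈ E^×` to `g • e`.  (When the action fixes `0` — which is the case for an
action by semigroup automorphisms fixing `0` — the truncation `T` is a no-op, and this
is the automorphism of `ℤ[E^×]` induced by `τ_g`.) -/
noncomputable def act (g : Γ) (x : ZE E) : ZE E :=
  ⟨T (MonoidAlgebra.ofCoeff (Finsupp.mapDomain (fun e : E => g • e) x.1.coeff)), T_apply_zero _⟩

end Action



attribute [local instance] Classical.propDecidable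

variable {E : Type} [SemilatticeWithZero E]

/-- A Γ-semilattice structure: the group acts by semigroup automorphisms fixing `0`. -/
def IsGammaSL (Γ E : Type) [Group Γ] [SemilatticeWithZero E] [MulAction Γ E] : Prop :=
  (∀ (g : Γ) (x y : E), g • (x * y) = (g • x) * (g • y)) ∧ (∀ g : Γ, g • (0 : E) = 0)

/-- The set `E_φ`. -/
def Ephi {D : Type} [NonUnitalCommRing D] (φ : ZE E →ₙ+* D) : Set (ZE E) :=
  { x | ∃ (e : E) (J : Finset E), e ≠ 0 ∧ (∀ f ∈ J, f ≠ 0 ∧ f * e = f ∧ f ≠ e) ∧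
      x = elt e - join J (fun f => f) ∧
      φ (elt e) = rjoin J (fun f => φ (elt f)) }

/-- `R` is a finite cover for `e ∈ E^×`. -/
def IsCover (e : E) (R : Finset E) : Prop :=
  (∀ f ∈ R, f ≠ 0 ∧ f * e = f) ∧
  ∀ f' : E, f' ≠ 0 → f' * e = f' → ∃ f ∈ R, f' * f ≠ 0

/-- `ℛ` is a collection of finite covers for `E`. -/
def CovSystem (ℛ : E → Set (Finset E)) : Prop :=
  ∀ e : E, e ≠ 0 → ∀ R ∈ ℛ e, IsCover e R

/-- Condition (i). -/
def CondI (ℛ : E → Set (Finset E)) : Prop :=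
  ∀ d e : E, d ≠ 0 → e ≠ 0 → d * e ≠ 0 → ∀ R ∈ ℛ e,
    d * e ∈ (R.image (fun f => d * f)).erase 0 ∨ (R.image (fun f => d * f)).erase 0 ∈ ℛ (d * e)

/-- Condition (ii). -/
def CondII (ℛ : E → Set (Finset E)) : Prop :=
  ∀ e : E, e ≠ 0 → ∀ r : ℕ, 0 < r → ∀ Rs : Fin r → Finset E,
    Function.Injective Rs → (∀ i, Rs i ∈ ℛ e) → ∀ ε : Fin r → E,
    (∀ i, ε i ∈ supp (join (Rs i) (fun f => f))) → ∀ j : Fin r,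
      (if r = 1 then e else eprod (Finset.univ.erase j) ε) ≠ 0 →
      eprod Finset.univ ε * (if r = 1 then e else eprod (Finset.univ.erase j) ε)
          = eprod Finset.univ ε ∧
      eprod Finset.univ ε ≠ (if r = 1 then e else eprod (Finset.univ.erase j) ε)

/-- Condition (iii). -/
def CondIII (Γ : Type) [Group Γ] [MulAction Γ E] (ℛ : E → Set (Finset E)) : Prop :=
  ∀ (g : Γ) (e : E), e ≠ 0 →
    (fun R : Finset E => R.image (fun f => g • f)) '' (ℛ e) = ℛ (g • e)

/-- `e(𝒮) = ∏_{R ∈ 𝒮} (e - ⋁R) ∈ ℤ[E^×]`. -/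
noncomputable def eS (e : E) (S : Finset (Finset E)) : ZE E :=
  nprod S (fun R => elt e - join R (fun f => f))

/-- `E(E,ℛ) = {e(𝒮) : e ∈ E^×, 𝒮 ⊆ ℛ(e) nonempty finite} ∪ {0} ⊆ ℤ[E^×]`. -/
def EER (ℛ : E → Set (Finset E)) : Set (ZE E) :=
  {x | ∃ (e : E) (S : Finset (Finset E)), e ≠ 0 ∧ S.Nonempty ∧ ↑S ⊆ ℛ e ∧ x = eS e S} ∪ {0}

/-- `R(𝒮,R̃) = {e(𝒮 ∪ {R̃})} ∪ {f ⬝ e(𝒮) : f ∈ R̃, f ⬝ e(𝒮) ≠ 0}`. -/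
noncomputable def RSR (e : E) (S : Finset (Finset E)) (Rt : Finset E) : Finset (ZE E) :=
  insert (eS e (insert Rt S)) ((Rt.image (fun f => elt f * eS e S)).erase 0)

/-- The collection of finite covers `ℛ(E,ℛ)` on `E(E,ℛ)`, assigning to an element
`x = e(𝒮)` of `E(E,ℛ)^×` the covers `R(𝒮,R̃)`, `R̃ ∈ ℛ(e) ∖ 𝒮` (over all ways of
presenting `x` in the form `e(𝒮)`). -/
def RER (ℛ : E → Set (Finset E)) (x : ZE E) : Set (Finset (ZE E)) :=
  {C | ∃ (e : E) (S : Finset (Finset E)) (Rt : Finset E),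
        e ≠ 0 ∧ S.Nonempty ∧ ↑S ⊆ ℛ e ∧ Rt ∈ ℛ e ∧ Rt ∉ S ∧ x = eS e S ∧ C = RSR e S Rt}

/-- The `ℤ`-linear map `ℤ[E₁^×] → ℤ[E₂^×]` induced by a map `θ` from `E₁` to `ℤ[E₂^×]`,
sending a basis element `e' ∈ E₁^×` to `θ e'`. -/
noncomputable def indMap {E₁ E₂ : Type} [SemilatticeWithZero E₁] [SemilatticeWithZero E₂]
    (θ : E₁ → ZE E₂) : ZE E₁ →ₗ[ℤ] ZE E₂ :=
  (Finsupp.linearCombination ℤ θ).comp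
    ((MonoidAlgebra.coeffLinearEquiv ℤ).toLinearMap.comp ((ZS E₁).subtype.toIntLinearMap))

/-- `(E₁, ℛ₁, θ)` is a realization of the construction `(E(E,ℛ), ℛ(E,ℛ))`:
`θ` identifies the abstract Γ-semilattice `E₁` with `E(E,ℛ) ⊆ ℤ[E^×]` (equivariantly,
multiplicatively and preserving `0`), and `ℛ₁` corresponds to `ℛ(E,ℛ)` under this
identification. -/
def Realizes {Γ E E₁ : Type} [Group Γ] [SemilatticeWithZero E] [MulAction Γ E]
    [SemilatticeWithZero E₁] [MulAction Γ E₁]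
    (ℛ : E → Set (Finset E)) (ℛ₁ : E₁ → Set (Finset E₁)) (θ : E₁ → ZE E) : Prop :=
  Function.Injective θ ∧ Set.range θ = EER ℛ ∧ θ 0 = 0 ∧
  (∀ x y : E₁, θ (x * y) = θ x * θ y) ∧
  (∀ (g : Γ) (x : E₁), θ (g • x) = act g (θ x)) ∧
  (∀ e' : E₁, e' ≠ 0 → ∀ C : Finset E₁, C ∈ ℛ₁ e' ↔ C.image θ ∈ RER ℛ (θ e'))

end IndRes

open IndRes

section AuxJoin

open Finset

/-- `inr` as an additive monoid hom. -/
noncomputable def inrAdd (A : Type) [NonUnitalCommRing A] : A →+ Unitization ℤ A :=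
  AddMonoidHom.mk' Unitization.inr (fun x y => Unitization.inr_add ℤ x y)

lemma inrAdd_apply {A : Type} [NonUnitalCommRing A] (a : A) :
    inrAdd A a = Unitization.inr a := rfl

lemma inr_nprod {ι A : Type} [NonUnitalCommRing A] (t : Finset ι) (ht : t.Nonempty)
    (f : ι → A) :
    (Unitization.inr (IndRes.nprod t f) : Unitization ℤ A)
      = ∏ j ∈ t, (Unitization.inr (f j) : Unitization ℤ A) := by
  set p : Unitization ℤ A := ∏ j ∈ t, (Unitization.inr (f j) : Unitization ℤ A) with hp
  have hfst : p.fst = 0 := by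
    have h := map_prod (Unitization.fstHom ℤ A).toMonoidHom
      (fun j => (Unitization.inr (f j) : Unitization ℤ A)) t
    obtain ⟨j0, hj0⟩ := ht
    have h2 : (Unitization.fstHom ℤ A) p = 0 := by
      rw [hp]; refine h.trans ?_
      exact Finset.prod_eq_zero hj0 (Unitization.fst_inr ℤ (f j0))
    exact h2
  have : (Unitization.inr (IndRes.nprod t f) : Unitization ℤ A) = Unitization.inr p.snd := rfl
  rw [this]
  conv_rhs => rw [← Unitization.inl_fst_add_inr_snd_eq p]
  rw [hfst, Unitization.inl_zero, zero_add]

lemma inr_rjoin {ι A : Type} [NonUnitalCommRing A] (s : Finset ι) (f : ι → A) :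
    (Unitization.inr (IndRes.rjoin s f) : Unitization ℤ A)
      = 1 - ∏ j ∈ s, (1 - (Unitization.inr (f j) : Unitization ℤ A)) := by
  classical
  have hexp : ∏ j ∈ s, (1 - (Unitization.inr (f j) : Unitization ℤ A))
      = ∑ t ∈ s.powerset,
          (-1 : Unitization ℤ A) ^ t.card
            * ∏ j ∈ t, (Unitization.inr (f j) : Unitization ℤ A) := by
    have h := Finset.prod_add (fun j => -(Unitization.inr (f j) : Unitization ℤ A))
      (fun _ => (1 : Unitization ℤ A)) s
    simp only [Finset.prod_const_one, mul_one] at h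
    calc ∏ j ∈ s, (1 - (Unitization.inr (f j) : Unitization ℤ A))
        = ∏ j ∈ s, (-(Unitization.inr (f j) : Unitization ℤ A) + 1) := by
          apply Finset.prod_congr rfl; intro j _; ring
      _ = ∑ t ∈ s.powerset, ∏ j ∈ t, -(Unitization.inr (f j) : Unitization ℤ A) := h
      _ = ∑ t ∈ s.powerset, (-1 : Unitization ℤ A) ^ t.card
            * ∏ j ∈ t, (Unitization.inr (f j) : Unitization ℤ A) := by
          apply Finset.sum_congr rfl; intro t _
          rw [← Finset.prod_const (-1 : Unitization ℤ A), ← Finset.prod_mul_distrib]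
          apply Finset.prod_congr rfl; intro j _; ring
  have hsplit := Finset.sum_filter_add_sum_filter_not s.powerset (fun t => t.Nonempty)
      (fun t => (-1 : Unitization ℤ A) ^ t.card
        * ∏ j ∈ t, (Unitization.inr (f j) : Unitization ℤ A))
  have hempty : s.powerset.filter (fun t => ¬ t.Nonempty) = {∅} := by
    ext t
    simp only [Finset.mem_filter, Finset.mem_powerset, Finset.not_nonempty_iff_eq_empty,
      Finset.mem_singleton]
    constructor
    · rintro ⟨-, h⟩; exact h
    · rintro rfl; exact ⟨Finset.empty_subset s, rfl⟩
  have hlhs : (Unitization.inr (IndRes.rjoin s f) : Unitization ℤ A)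
      = ∑ t ∈ s.powerset.filter (fun t => t.Nonempty),
          -((-1 : Unitization ℤ A) ^ t.card
            * ∏ j ∈ t, (Unitization.inr (f j) : Unitization ℤ A)) := by
    have h0 : (Unitization.inr (IndRes.rjoin s f) : Unitization ℤ A)
        = inrAdd A (IndRes.rjoin s f) := rfl
    rw [h0]
    unfold IndRes.rjoin
    rw [map_sum]
    apply Finset.sum_congr (by simp [Finset.filter_congr_decidable])
    intro t ht
    have htne : t.Nonempty := (Finset.mem_filter.mp ht).2
    rw [map_zsmul, inrAdd_apply, inr_nprod t htne f, zsmul_eq_mul]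
    rw [← eq_intCast (Int.castRingHom (Unitization ℤ A)), map_pow, map_neg, map_one]
    ring
  rw [hlhs, hexp, ← hsplit, hempty]
  simp only [Finset.sum_singleton, Finset.card_empty, pow_zero, Finset.prod_empty, mul_one,
    Finset.sum_neg_distrib]
  ring

lemma rjoin_props {ι A : Type} [NonUnitalCommRing A] (s : Finset ι) (f : ι → A)
    (hf : ∀ j ∈ s, f j * f j = f j) :
    IndRes.rjoin s f * IndRes.rjoin s f = IndRes.rjoin s f ∧
    (∀ j ∈ s, f j * IndRes.rjoin s f = f j) ∧
    (∀ x : A, x * x = x → (∀ j ∈ s, f j * x = f j) →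
      IndRes.rjoin s f * x = IndRes.rjoin s f) := by
  classical
  have hinj : Function.Injective (Unitization.inr : A → Unitization ℤ A) :=
    Unitization.inr_injective
  set P : Unitization ℤ A := ∏ j ∈ s, (1 - (Unitization.inr (f j) : Unitization ℤ A)) with hP
  have hkey : (Unitization.inr (IndRes.rjoin s f) : Unitization ℤ A) = 1 - P := inr_rjoin s f
  have hPidem : P * P = P := by
    rw [hP, ← Finset.prod_mul_distrib]
    apply Finset.prod_congr rfl
    intro j hj
    have ha : (Unitization.inr (f j) : Unitization ℤ A) * Unitization.inr (f j)
        = Unitization.inr (f j) := by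
      rw [← Unitization.inr_mul, hf j hj]
    linear_combination ha
  refine ⟨?_, ?_, ?_⟩
  · apply hinj
    rw [Unitization.inr_mul, hkey]
    linear_combination hPidem
  · intro j hj
    apply hinj
    rw [Unitization.inr_mul, hkey]
    have h0 : (Unitization.inr (f j) : Unitization ℤ A) * P = 0 := by
      rw [hP, ← Finset.mul_prod_erase s
        (fun j => (1 : Unitization ℤ A) - Unitization.inr (f j)) hj, ← mul_assoc]
      have h1 : (Unitization.inr (f j) : Unitization ℤ A)
          * (1 - Unitization.inr (f j)) = 0 := by
        have ha : (Unitization.inr (f j) : Unitization ℤ A) * Unitization.inr (f j)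
            = Unitization.inr (f j) := by rw [← Unitization.inr_mul, hf j hj]
        linear_combination -ha
      rw [h1, zero_mul]
    linear_combination -h0
  · intro x hx hxj
    apply hinj
    rw [Unitization.inr_mul, hkey]
    have hQ : P * (1 - (Unitization.inr x : Unitization ℤ A))
        = 1 - (Unitization.inr x : Unitization ℤ A) := by
      rw [hP]
      refine Finset.prod_induction _
        (fun y => y * (1 - (Unitization.inr x : Unitization ℤ A))
          = 1 - (Unitization.inr x : Unitization ℤ A)) ?_ (one_mul _) ?_
      · intro a b hpa hpb
        rw [mul_assoc, hpb, hpa]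
      · intro j hj
        have ha : (Unitization.inr (f j) : Unitization ℤ A) * Unitization.inr x
            = Unitization.inr (f j) := by rw [← Unitization.inr_mul, hxj j hj]
        have hb : (Unitization.inr x : Unitization ℤ A) * Unitization.inr x
            = Unitization.inr x := by rw [← Unitization.inr_mul, hx]
        linear_combination ha
    linear_combination hQ

lemma elt_mul_elt {E : Type} [SemilatticeWithZero E] (a b : E) :
    IndRes.elt a * IndRes.elt b = IndRes.elt (a * b) := by
  apply Subtype.ext
  show IndRes.T (IndRes.T (IndRes.sgl a 1) * IndRes.T (IndRes.sgl b 1))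
      = IndRes.T (IndRes.sgl (a * b) 1)
  rw [IndRes.T_mul_left, IndRes.T_mul_right]
  congr 1
  show MonoidAlgebra.single a (1 : ℤ) * MonoidAlgebra.single b 1
      = MonoidAlgebra.single (a * b) 1
  rw [MonoidAlgebra.single_mul_single, one_mul]

end AuxJoin

theorem statement_0 {E ι : Type} [SemilatticeWithZero E]
    (J : Finset ι) (hJ : J.Nonempty) (e : ι → E) (he : ∀ j ∈ J, e j ≠ 0) :
    join J e * join J e = join J e ∧
    (∀ j ∈ J, elt (e j) * join J e = elt (e j)) ∧
    ∀ x : ZE E, x * x = x → (∀ j ∈ J, elt (e j) * x = elt (e j)) →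
      join J e * x = join J e := by
  have hf : ∀ j ∈ J, IndRes.elt (e j) * IndRes.elt (e j) = IndRes.elt (e j) := by
    intro j _
    rw [elt_mul_elt, SemilatticeWithZero.mul_idem]
  have h := rjoin_props J (fun j => IndRes.elt (e j)) hf
  unfold IndRes.join
  exact h
end

section
/- Let (E, ℛ, τ) satisfy conditions (i), (ii), (iii). Let g ∈ Γ, e ∈ E×, and let 𝒮 ⊆ ℛ(e) be nonempty finite. If the induced action of g on ℤ[E×] fixes e(𝒮), i.e. τ_g(e(𝒮)) = e(𝒮), then τ_g(e) = e. -/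
set_option linter.unusedSectionVars false

namespace IndRes

variable {E : Type} [SemilatticeWithZero E]

attribute [local instance] Classical.propDecidable

variable {E : Type} [SemilatticeWithZero E]

end IndRes

namespace IndRes

attribute [local instance] Classical.propDecidable

variable {E : Type} [SemilatticeWithZero E]

lemma supp_ne_zero' {x : ZE E} {f : E} (hf : f ∈ supp x) : f ≠ 0 := by
  intro h; subst h; exact Finsupp.mem_support_iff.mp hf x.2

lemma T_apply_ne' (z : MonoidAlgebra ℤ E) {d : E} (hd : d ≠ 0) : (T z).coeff d = z.coeff d := by
  show ((z - sgl 0 (z.coeff 0) : MonoidAlgebra ℤ E)).coeff d = z.coeff d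
  rw [MonoidAlgebra.coeff_sub, Finsupp.sub_apply, sgl_apply_ne 0 d _ (Ne.symm hd), sub_zero]

lemma elt_val_of_ne' {e : E} (he : e ≠ 0) : (elt e).1 = sgl e 1 :=
  T_eq_self (sgl_apply_ne e 0 1 he)

lemma elt_mul' (a b : E) : elt a * elt b = elt (a * b) := by
  apply Subtype.ext
  show T (T (sgl a 1) * T (sgl b 1)) = T (sgl (a * b) 1)
  rw [T_mul_left, T_mul_right]
  congr 1
  have h1 : sgl a (1 : ℤ) * sgl b 1 = sgl (a * b) (1 * 1) :=
    MonoidAlgebra.single_mul_single ..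
  rw [h1, one_mul]

lemma supp_mul_subset' (x y : ZE E) {d : E} (hd : d ∈ supp (x * y)) :
    ∃ a ∈ supp x, ∃ b ∈ supp y, a * b = d := by
  have hd0 : d ≠ 0 := supp_ne_zero' hd
  have h1 : (x * y).1.coeff d ≠ 0 := Finsupp.mem_support_iff.mp hd
  rw [ZE.val_mul, T_apply_ne' _ hd0] at h1
  have h2 : d ∈ (x.1 * y.1).coeff.support := Finsupp.mem_support_iff.mpr h1
  have h3 := MonoidAlgebra.support_coeff_mul_subset x.1 y.1 h2
  rw [Finset.mem_mul] at h3
  obtain ⟨a, ha, b, hb, hab⟩ := h3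
  exact ⟨a, ha, b, hb, hab⟩

lemma elt_mul_of_supp' {e : E} (he : e ≠ 0) (x : ZE E) (h : ∀ f ∈ supp x, e * f = f) :
    elt e * x = x := by
  apply Subtype.ext
  show T (T (sgl e 1) * x.1) = x.1
  rw [T_eq_self (sgl_apply_ne e 0 1 he)]
  have hx : x.1 = ∑ a ∈ x.1.coeff.support, sgl a (x.1.coeff a) := by
    conv_lhs => rw [← MonoidAlgebra.sum_coeff_single x.1]
    rfl
  have hmul : sgl e 1 * x.1 = x.1 := by
    calc sgl e 1 * x.1 = ∑ a ∈ x.1.coeff.support, sgl e 1 * sgl a (x.1.coeff a) := by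
          conv_lhs => rw [hx]
          rw [Finset.mul_sum]
      _ = ∑ a ∈ x.1.coeff.support, sgl a (x.1.coeff a) := by
          refine Finset.sum_congr rfl fun a ha => ?_
          have h1 : sgl e 1 * sgl a (x.1.coeff a)
              = sgl (e * a) (1 * x.1.coeff a) := MonoidAlgebra.single_mul_single ..
          rw [h1, one_mul, h a ha]
      _ = x.1 := hx.symm
  rw [hmul, T_eq_self x.2]

lemma prod_inr' {ι A : Type} [NonUnitalCommRing A] {s : Finset ι} (hs : s.Nonempty)
    (f : ι → A) :
    ∏ j ∈ s, (Unitization.inr (f j) : Unitization ℤ A) = Unitization.inr (nprod s f) := by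
  induction hs using Finset.Nonempty.cons_induction with
  | singleton i => simp [nprod]
  | cons i s hi hs ih =>
      rw [Finset.prod_cons, ih]
      rw [show nprod (Finset.cons i s hi) f
            = (Unitization.inr (f i) * Unitization.inr (nprod s f) : Unitization ℤ A).snd by
          rw [nprod, Finset.prod_cons, ih]]
      rw [← Unitization.inr_mul, Unitization.snd_inr, Unitization.inr_mul]

lemma nprod_singleton' {ι A : Type} [NonUnitalCommRing A] (i : ι) (f : ι → A) :
    nprod {i} f = f i := by
  simp [nprod]

lemma nprod_cons' {ι A : Type} [NonUnitalCommRing A] {i : ι} {s : Finset ι} (hi : i ∉ s)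
    (hs : s.Nonempty) (f : ι → A) : nprod (Finset.cons i s hi) f = f i * nprod s f := by
  rw [nprod, Finset.prod_cons, prod_inr' hs, ← Unitization.inr_mul, Unitization.snd_inr]

lemma eprod_fin_one' (f : Fin 1 → E) : eprod Finset.univ f = f 0 := by
  rw [eprod, Finset.univ_unique, Finset.toList_singleton]
  rfl

lemma supp_join_prop' {ℛ : E → Set (Finset E)} (h2 : CondII ℛ) {e : E} (he : e ≠ 0)
    {R : Finset E} (hR : R ∈ ℛ e) {ε : E} (hε : ε ∈ supp (join R (fun f => f))) :
    ε * e = ε ∧ ε ≠ e := by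
  have key := h2 e he 1 one_pos (fun _ => R)
    (fun a b _ => Subsingleton.elim a b) (fun _ => hR) (fun _ => ε) (fun _ => hε) 0
    (by simp [he])
  rw [if_pos rfl] at key
  rw [eprod_fin_one'] at key
  exact key

/-- Main structural lemma: `e(𝒮) = e + y` with all of `supp y` strictly below `e`. -/
lemma eS_eq_elt_add {ℛ : E → Set (Finset E)} (h2 : CondII ℛ) {e : E} (he : e ≠ 0) :
    ∀ S : Finset (Finset E), (hS : S.Nonempty) → ↑S ⊆ ℛ e →
    ∃ y : ZE E, eS e S = elt e + y ∧ ∀ f ∈ supp y, f * e = f ∧ f ≠ e := by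
  intro S hS
  induction hS using Finset.Nonempty.cons_induction with
  | singleton R =>
      intro hSR
      have hR : R ∈ ℛ e := hSR (by simp)
      refine ⟨-(join R (fun f => f)), ?_, ?_⟩
      · rw [eS, nprod_singleton']; abel
      · intro f hf
        have hf' : f ∈ supp (join R (fun f => f)) := by
          have hval : (-(join R (fun f => f))).1 = -((join R (fun f => f)).1) := rfl
          have hsupp : supp (-(join R (fun f => f))) = supp (join R (fun f => f)) := by
            show (-(join R (fun f => f))).1.coeff.support = _
            rw [hval, MonoidAlgebra.coeff_neg, Finsupp.support_neg]; rfl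
          rwa [hsupp] at hf
        exact supp_join_prop' h2 he hR hf'
  | cons R S hRS hS ih =>
      intro hSR
      have hR : R ∈ ℛ e := hSR (by simp)
      have hSR' : ↑S ⊆ ℛ e := by
        intro t ht
        exact hSR (by simp [ht])
      obtain ⟨y, hy, hysupp⟩ := ih hSR'
      set jR := join R (fun f => f) with hjR
      have heS : eS e (Finset.cons R S hRS) = (elt e - jR) * (elt e + y) := by
        rw [eS, nprod_cons' hRS hS, ← hy]; rfl
      have hee : elt e * elt e = elt e := by rw [elt_mul', SemilatticeWithZero.mul_idem]
      have hey : elt e * y = y := by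
        refine elt_mul_of_supp' he y fun f hf => ?_
        rw [mul_comm]; exact (hysupp f hf).1
      refine ⟨y - jR * (elt e + y), ?_, ?_⟩
      · rw [heS, sub_mul, mul_add, hee, hey]; abel
      · intro f hf
        have hf0 : f ≠ 0 := supp_ne_zero' hf
        have hcases : f ∈ supp y ∨ f ∈ supp (jR * (elt e + y)) := by
          by_contra hc
          push_neg at hc
          have h1 : y.1.coeff f = 0 := Finsupp.notMem_support_iff.mp hc.1
          have h2' : (jR * (elt e + y)).1.coeff f = 0 := Finsupp.notMem_support_iff.mp hc.2
          have : (y - jR * (elt e + y)).1.coeff f = 0 := by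
            show (y.1 - (jR * (elt e + y)).1).coeff f = 0
            rw [MonoidAlgebra.coeff_sub, Finsupp.sub_apply, h1, h2', sub_zero]
          exact Finsupp.mem_support_iff.mp hf this
        rcases hcases with hfy | hfp
        · exact hysupp f hfy
        · obtain ⟨ε, hε, b, hb, hεb⟩ := supp_mul_subset' _ _ hfp
          have hεp := supp_join_prop' h2 he hR hε
          have hbe : b * e = b := by
            have hbval : (elt e + y).1.coeff b ≠ 0 := Finsupp.mem_support_iff.mp hb
            have : ((elt e).1 + y.1).coeff b ≠ 0 := hbval
            rw [MonoidAlgebra.coeff_add, Finsupp.add_apply, elt_val_of_ne' he] at this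
            by_cases hbe' : b = e
            · rw [hbe', SemilatticeWithZero.mul_idem]
            · have : y.1.coeff b ≠ 0 := by
                rwa [sgl_apply_ne e b 1 fun h => hbe' h.symm, zero_add] at this
              exact (hysupp b (Finsupp.mem_support_iff.mpr this)).1
          constructor
          · rw [← hεb, mul_assoc, hbe]
          · intro hfe
            rw [← hεb] at hfe
            have h1 : e * ε = e := by
              calc e * ε = ε * b * ε := by rw [hfe]
                _ = ε * ε * b := by rw [mul_assoc, mul_comm b ε, ← mul_assoc]
                _ = ε * b := by rw [SemilatticeWithZero.mul_idem]
                _ = e := hfe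
            exact hεp.2 (by rw [← hεp.1, mul_comm, h1])

lemma act_val_apply' {Γ : Type} [Group Γ] [MulAction Γ E] (hz : ∀ g : Γ, g • (0 : E) = 0)
    (g : Γ) (x : ZE E) {f : E} (hf : f ≠ 0) :
    (act g x).1.coeff (g • f) = x.1.coeff f := by
  show (T (MonoidAlgebra.ofCoeff (Finsupp.mapDomain (fun e : E => g • e) x.1.coeff))).coeff (g • f) = x.1.coeff f
  have hinj : Function.Injective (fun e : E => g • e) := MulAction.injective g
  have hgf : g • f ≠ 0 := by
    intro h
    apply hf
    have := congrArg (fun t => g⁻¹ • t) h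
    simpa [hz g⁻¹] using this
  rw [T_apply_ne' _ hgf]
  exact Finsupp.mapDomain_apply hinj x.1.coeff f

end IndRes

open IndRes

theorem statement_17 {E Γ : Type} [SemilatticeWithZero E] [Group Γ] [MulAction Γ E]
    (hact : IsGammaSL Γ E) (ℛ : E → Set (Finset E))
    (hcov : CovSystem ℛ) (h1 : CondI ℛ) (h2 : CondII ℛ) (h3 : CondIII Γ ℛ)
    (g : Γ) (e : E) (he : e ≠ 0) (S : Finset (Finset E)) (hS : S.Nonempty) (hSR : ↑S ⊆ ℛ e)
    (hfix : act g (eS e S) = eS e S) :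
    g • e = e := by
  obtain ⟨y, hxy, hysupp⟩ := eS_eq_elt_add h2 he S hS hSR
  set x := eS e S with hx
  have hxe : x.1.coeff e = 1 := by
    rw [hxy]
    show ((elt e).1 + y.1).coeff e = 1
    have hye : y.1.coeff e = 0 := by
      by_contra h
      exact (hysupp e (Finsupp.mem_support_iff.mpr h)).2 rfl
    rw [MonoidAlgebra.coeff_add, Finsupp.add_apply, elt_val_of_ne' he, sgl_apply_self, hye, add_zero]
  have hsuppx : ∀ f ∈ supp x, f * e = f := by
    intro f hf
    have hfv : ((elt e).1 + y.1).coeff f ≠ 0 := by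
      have := Finsupp.mem_support_iff.mp hf
      rwa [hxy] at this
    by_cases hfe : f = e
    · rw [hfe, SemilatticeWithZero.mul_idem]
    · rw [MonoidAlgebra.coeff_add, Finsupp.add_apply, elt_val_of_ne' he, sgl_apply_ne e f 1 fun h => hfe h.symm,
        zero_add] at hfv
      exact (hysupp f (Finsupp.mem_support_iff.mpr hfv)).1
  -- g⁻¹ • e ∈ supp x
  have hge0 : g⁻¹ • e ≠ 0 := by
    intro h
    apply he
    have := congrArg (fun t => g • t) h
    simpa [hact.2 g] using this
  have h1 : x.1.coeff (g⁻¹ • e) = 1 := by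
    have := act_val_apply' hact.2 g x hge0
    rw [hfix] at this
    rw [← this, smul_inv_smul, hxe]
  have h2' : (g⁻¹ • e) * e = g⁻¹ • e :=
    hsuppx _ (Finsupp.mem_support_iff.mpr (h1 ▸ one_ne_zero))
  have he_ge : e * (g • e) = e := by
    have := congrArg (fun t => g • t) h2'
    simpa [hact.1 g, smul_inv_smul] using this
  -- g • e ∈ supp x
  have h3' : x.1.coeff (g • e) = 1 := by
    have := act_val_apply' hact.2 g x he
    rw [hfix] at this
    rw [this, hxe]
  have h4 : (g • e) * e = g • e :=
    hsuppx _ (Finsupp.mem_support_iff.mpr (h3' ▸ one_ne_zero))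
  rw [← h4, mul_comm, he_ge]
end
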